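/- arXiv:1107.3374 — 2 statements merged into one kernel-verified Lean document; each statement's English description precedes it below -/
import Mathlib

section
/- Let n ≥ 1, let K ⊆ ℂⁿ be a nonempty compact set, p ∈ ℂⁿ, and C > 0. Suppose that for every entire function f : ℂⁿ → ℂ (i.e., f differentiable over ℂ on all of ℂⁿ) one has |f(p)| ≤ C · sup_{x ∈ K} |f(x)|. Then for every entire function f : ℂⁿ → ℂ one has |f(p)| ≤ sup_{x ∈ K} |f(x)|. -/
open Complex

/-- Root-taking trick: if `a^k ≤ C * b^k` for all `k ≥ 1`, then `a ≤ b`. -/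
lemma aux_pow_le (a b C : ℝ) (ha : 0 ≤ a) (hb : 0 ≤ b) (hC : 0 < C)
    (h : ∀ k : ℕ, 1 ≤ k → a ^ k ≤ C * b ^ k) : a ≤ b := by
  by_contra hab
  push_neg at hab
  rcases eq_or_lt_of_le hb with hb0 | hb0
  · have h1 := h 1 le_rfl
    simp [← hb0] at h1
    nlinarith
  · have h1 : 1 < a / b := (one_lt_div hb0).2 hab
    obtain ⟨k, hk1, hk⟩ :=
      (((tendsto_pow_atTop_atTop_of_one_lt h1).eventually_gt_atTop C).and
        (Filter.eventually_ge_atTop 1)).exists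
    have hle : (a / b) ^ k ≤ C := by
      rw [div_pow, div_le_iff₀ (pow_pos hb0 k)]
      exact h k hk
    linarith

/-- If point evaluation of entire functions on `ℂⁿ` at `p` is dominated by `C` times the
sup-norm over a nonempty compact set `K`, then it is dominated by the sup-norm itself. -/
theorem statement1 (n : ℕ) (hn : 1 ≤ n) (K : Set (Fin n → ℂ)) (hK : IsCompact K)
    (hKne : K.Nonempty) (p : Fin n → ℂ) (C : ℝ) (hC : 0 < C)
    (H : ∀ f : (Fin n → ℂ) → ℂ, Differentiable ℂ f →
      ‖f p‖ ≤ C * ⨆ x : K, ‖f x‖) :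
    ∀ f : (Fin n → ℂ) → ℂ, Differentiable ℂ f →
      ‖f p‖ ≤ ⨆ x : K, ‖f x‖ := by
  intro f hf
  haveI : Nonempty K := hKne.to_subtype
  -- the sup is attained at some point x₀ of K
  obtain ⟨x₀, hx₀K, hmax⟩ := hK.exists_isMaxOn hKne
    ((continuous_norm.comp hf.continuous).continuousOn)
  have key : ‖f p‖ ≤ ‖f x₀‖ := by
    apply aux_pow_le _ _ C (norm_nonneg _) (norm_nonneg _) hC
    intro k hk
    have hdiff : Differentiable ℂ (fun x => (f x) ^ k) := hf.pow k
    have h1 := H _ hdiff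
    have h2 : (⨆ x : K, ‖(f x) ^ k‖) ≤ ‖f x₀‖ ^ k := by
      apply ciSup_le
      intro x
      rw [norm_pow]
      exact pow_le_pow_left₀ (norm_nonneg _) (hmax x.2) k
    calc ‖f p‖ ^ k = ‖(f p) ^ k‖ := (norm_pow _ _).symm
      _ ≤ C * ⨆ x : K, ‖(f x) ^ k‖ := h1
      _ ≤ C * ‖f x₀‖ ^ k := by
          exact mul_le_mul_of_nonneg_left h2 hC.le
  refine key.trans ?_
  exact le_ciSup (f := fun x : K => ‖f x‖)
    ⟨‖f x₀‖, by rintro _ ⟨x, rfl⟩; exact hmax x.2⟩ ⟨x₀, hx₀K⟩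
end

section
/- Let n ≥ 1, m ≥ 2n, and d ∈ ℕ. For i = 1,…,n define the ℂ-linear operator Lᵢ on the polynomial ring ℂ[x₁,…,x_m] (MvPolynomial (Fin m) ℂ) by Lᵢ f = ∂f/∂xᵢ + i·∂f/∂x_{n+i}. Suppose g₁,…,g_n ∈ ℂ[x₁,…,x_m] are homogeneous of degree d and satisfy Lᵢ g_j = L_j gᵢ for all 1 ≤ i, j ≤ n. Then there exists f ∈ ℂ[x₁,…,x_m], homogeneous of degree d + 1, such that Lᵢ f = gᵢ for all i = 1,…,n. -/
open MvPolynomial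

namespace S5
noncomputable section

variable {m : ℕ}

def wt (n : ℕ) (hnm : n ≤ m) (μ : Fin m →₀ ℕ) : ℕ :=
  ∑ i : Fin n, μ (Fin.castLE hnm i)

def W (n : ℕ) (hnm : n ≤ m) (t : ℕ) (p : MvPolynomial (Fin m) ℂ) : MvPolynomial (Fin m) ℂ :=
  Finsupp.sum (AddMonoidAlgebra.coeff p) fun μ c => monomial μ (((wt n hnm μ + t : ℕ) : ℂ)⁻¹ * c)

lemma W_monomial (n : ℕ) (hnm : n ≤ m) (t : ℕ) (μ : Fin m →₀ ℕ) (c : ℂ) :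
    W n hnm t (monomial μ c) = monomial μ (((wt n hnm μ + t : ℕ) : ℂ)⁻¹ * c) := by
  rw [W, sum_monomial_eq]; simp

lemma W_add (n : ℕ) (hnm : n ≤ m) (t : ℕ) (p q : MvPolynomial (Fin m) ℂ) :
    W n hnm t (p + q) = W n hnm t p + W n hnm t q := by
  rw [W, W, W, AddMonoidAlgebra.coeff_add, Finsupp.sum_add_index] <;> simp [mul_add]

lemma coeff_W (n : ℕ) (hnm : n ≤ m) (t : ℕ) (p : MvPolynomial (Fin m) ℂ) (μ : Fin m →₀ ℕ) :
    coeff μ (W n hnm t p) = ((wt n hnm μ + t : ℕ) : ℂ)⁻¹ * coeff μ p := by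
  induction p using MvPolynomial.induction_on' with
  | monomial ν a =>
    rw [W_monomial, coeff_monomial, coeff_monomial]
    split
    · next h => subst h; rfl
    · simp
  | add p q hp hq => rw [W_add, coeff_add, coeff_add, hp, hq, mul_add]

lemma W_isHomogeneous (n : ℕ) (hnm : n ≤ m) (t : ℕ) {p : MvPolynomial (Fin m) ℂ} {d : ℕ}
    (hp : p.IsHomogeneous d) : (W n hnm t p).IsHomogeneous d := by
  intro μ hμ
  rw [coeff_W] at hμ
  exact hp (right_ne_zero_of_mul hμ)

/-- wt decreases by exactly 1 after removing one from coordinate `k < n`. -/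
lemma wt_sub_single (n : ℕ) (hnm : n ≤ m) (μ : Fin m →₀ ℕ) (k : Fin m) (hk : (k : ℕ) < n)
    (hμk : 1 ≤ μ k) :
    wt n hnm (μ - Finsupp.single k 1) + 1 = wt n hnm μ := by
  set k₀ : Fin n := ⟨(k : ℕ), hk⟩ with hk₀
  have hcast : Fin.castLE hnm k₀ = k := by ext; rfl
  rw [wt, wt, ← Finset.add_sum_erase _ _ (Finset.mem_univ k₀),
    ← Finset.add_sum_erase _ _ (Finset.mem_univ k₀), hcast]
  have h1 : ((μ - Finsupp.single k 1 : Fin m →₀ ℕ)) k = μ k - 1 := by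
    rw [Finsupp.tsub_apply]; simp
  have h2 : ∀ i ∈ Finset.univ.erase k₀, ((μ - Finsupp.single k 1 : Fin m →₀ ℕ)) (Fin.castLE hnm i)
      = μ (Fin.castLE hnm i) := by
    intro i hi
    have hne : k ≠ Fin.castLE hnm i := by
      intro h
      exact Finset.ne_of_mem_erase hi (Fin.ext (by simpa using congrArg Fin.val h.symm))
    rw [Finsupp.tsub_apply, Finsupp.single_eq_of_ne' hne]
    simp
  rw [Finset.sum_congr rfl h2, h1]
  omega



lemma single_add_sub (μ : Fin m →₀ ℕ) (k : Fin m) (h : 1 ≤ μ k) :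
    Finsupp.single k 1 + (μ - Finsupp.single k 1) = μ := by
  ext i
  rw [Finsupp.add_apply, Finsupp.tsub_apply]
  by_cases hik : i = k
  · subst hik; simp; omega
  · simp [Finsupp.single_eq_of_ne' (Ne.symm hik)]

lemma pderiv_W (n : ℕ) (hnm : n ≤ m) (k : Fin m) (hk : (k : ℕ) < n)
    (p : MvPolynomial (Fin m) ℂ) :
    pderiv k (W n hnm 1 p) = W n hnm 2 (pderiv k p) := by
  induction p using MvPolynomial.induction_on' with
  | add p q hp hq => rw [map_add, W_add, map_add, W_add, hp, hq]
  | monomial ν a =>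
    rw [W_monomial, pderiv_monomial, pderiv_monomial, W_monomial]
    by_cases h : ν k = 0
    · simp [h]
    · have hw := wt_sub_single n hnm ν k hk (by omega)
      have h2 : ((wt n hnm (ν - Finsupp.single k 1) + 2 : ℕ) : ℂ)
          = ((wt n hnm ν + 1 : ℕ) : ℂ) := by
        congr 1; omega
      congr 1
      rw [h2]
      ring

lemma W_homotopy (n : ℕ) (hnm : n ≤ m) (p : MvPolynomial (Fin m) ℂ) :
    W n hnm 1 p + ∑ i : Fin n,
      X (Fin.castLE hnm i) * W n hnm 2 (pderiv (Fin.castLE hnm i) p) = p := by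
  induction p using MvPolynomial.induction_on' with
  | add p q hp hq =>
    simp only [W_add, map_add, mul_add, Finset.sum_add_distrib]
    linear_combination hp + hq
  | monomial ν a =>
    have hterm : ∀ i : Fin n,
        X (Fin.castLE hnm i) * W n hnm 2 (pderiv (Fin.castLE hnm i) (monomial ν a))
        = monomial ν (((wt n hnm ν + 1 : ℕ) : ℂ)⁻¹ * a * (ν (Fin.castLE hnm i) : ℂ)) := by
      intro i
      set k := Fin.castLE hnm i with hkdef
      have hk : (k : ℕ) < n := i.isLt
      rw [pderiv_monomial, W_monomial]
      by_cases h : ν k = 0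
      · simp [h]
      · have hw := wt_sub_single n hnm ν k hk (by omega)
        have h2 : ((wt n hnm (ν - Finsupp.single k 1) + 2 : ℕ) : ℂ)
            = ((wt n hnm ν + 1 : ℕ) : ℂ) := by congr 1; omega
        rw [X, monomial_mul, single_add_sub ν k (by omega), h2]
        congr 1
        ring
    rw [Finset.sum_congr rfl (fun i _ => hterm i), W_monomial, ← map_sum, ← Finset.mul_sum,
      ← Nat.cast_sum]
    have hwt : ∑ i : Fin n, (ν (Fin.castLE hnm i)) = wt n hnm ν := rfl
    rw [hwt, ← map_add]
    congr 1
    have hne : ((wt n hnm ν : ℂ) + 1) ≠ 0 := Nat.cast_add_one_ne_zero _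
    push_cast
    field_simp
    ring
lemma lemA (n : ℕ) (hnm : n ≤ m) (d : ℕ) (G : Fin n → MvPolynomial (Fin m) ℂ)
    (hG : ∀ i, (G i).IsHomogeneous d)
    (hsym : ∀ i j, pderiv (Fin.castLE hnm i) (G j) = pderiv (Fin.castLE hnm j) (G i)) :
    ∃ F : MvPolynomial (Fin m) ℂ, F.IsHomogeneous (d + 1) ∧
      ∀ i, pderiv (Fin.castLE hnm i) F = G i := by
  refine ⟨∑ i : Fin n, X (Fin.castLE hnm i) * W n hnm 1 (G i), ?_, ?_⟩
  · apply IsHomogeneous.sum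
    intro i _
    have := (isHomogeneous_X ℂ (Fin.castLE hnm i)).mul (W_isHomogeneous n hnm 1 (hG i))
    simpa [Nat.add_comm] using this
  · intro j
    rw [map_sum]
    have key : ∀ i : Fin n, pderiv (Fin.castLE hnm j) (X (Fin.castLE hnm i) * W n hnm 1 (G i))
        = (if i = j then W n hnm 1 (G j) else 0)
          + X (Fin.castLE hnm i) * W n hnm 2 (pderiv (Fin.castLE hnm i) (G j)) := by
      intro i
      rw [pderiv_mul, pderiv_W n hnm (Fin.castLE hnm j) j.isLt, hsym j i]
      by_cases h : i = j
      · subst h; rw [pderiv_X_self, if_pos rfl, one_mul]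
      · rw [pderiv_X_of_ne (fun hc => h (Fin.castLE_injective hnm hc)), if_neg h, zero_mul,
          zero_add]
    rw [Finset.sum_congr rfl (fun i _ => key i), Finset.sum_add_distrib,
      Finset.sum_ite_eq' Finset.univ j, if_pos (Finset.mem_univ j)]
    exact W_homotopy n hnm (G j)


/-- generic chain rule for substitutions of multivariate polynomials -/
lemma pderiv_aeval (u : Fin m → MvPolynomial (Fin m) ℂ) (k : Fin m)
    (p : MvPolynomial (Fin m) ℂ) :
    pderiv k (aeval u p) = ∑ l : Fin m, pderiv k (u l) * aeval u (pderiv l p) := by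
  induction p using MvPolynomial.induction_on with
  | C a => simp
  | add p q hp hq => simp only [map_add, hp, hq, Finset.sum_add_distrib, mul_add] at *
  | mul_X p j hp =>
    rw [map_mul, aeval_X, pderiv_mul, hp]
    have hterm : ∀ l : Fin m, pderiv k (u l) * aeval u (pderiv l (p * X j))
        = pderiv k (u l) * aeval u (pderiv l p) * u j
          + (if l = j then pderiv k (u l) * aeval u p else 0) := by
      intro l
      rw [pderiv_mul, map_add, map_mul, aeval_X, mul_add, mul_assoc]
      congr 1
      by_cases h : l = j
      · subst h; rw [pderiv_X_self, if_pos rfl, mul_one]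
      · rw [pderiv_X_of_ne (Ne.symm h), if_neg h, mul_zero, map_zero, mul_zero]
    rw [Finset.sum_congr rfl (fun l _ => hterm l), Finset.sum_add_distrib,
      Finset.sum_ite_eq' Finset.univ j, if_pos (Finset.mem_univ j), ← Finset.sum_mul]
    ring

/-- the shear substitution `x_{n+i} ↦ x_{n+i} + t x_i` -/
def sub (n : ℕ) (hm : 2 * n ≤ m) (t : ℂ) : Fin m → MvPolynomial (Fin m) ℂ :=
  fun k => if h : n ≤ (k : ℕ) ∧ (k : ℕ) < 2 * n
    then X k + C t * X ⟨(k : ℕ) - n, by omega⟩ else X k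

lemma sub_isHomogeneous (n : ℕ) (hm : 2 * n ≤ m) (t : ℂ) (k : Fin m) :
    (sub n hm t k).IsHomogeneous 1 := by
  rw [sub]
  split
  · exact (isHomogeneous_X ℂ k).add (isHomogeneous_C_mul_X t _)
  · exact isHomogeneous_X ℂ k

lemma aeval_sub_isHomogeneous (n : ℕ) (hm : 2 * n ≤ m) (t : ℂ) {d : ℕ}
    {p : MvPolynomial (Fin m) ℂ} (hp : p.IsHomogeneous d) :
    (aeval (sub n hm t) p).IsHomogeneous d := by
  have := hp.aeval (sub n hm t) (fun i => sub_isHomogeneous n hm t i)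
  simpa using this

lemma aeval_sub_sub (n : ℕ) (hm : 2 * n ≤ m) (t s : ℂ) (p : MvPolynomial (Fin m) ℂ) :
    aeval (sub n hm t) (aeval (sub n hm s) p) = aeval (sub n hm (t + s)) p := by
  have hX : ∀ k : Fin m, aeval (sub n hm t) (sub n hm s k) = sub n hm (t + s) k := by
    intro k
    rw [sub, sub]
    split
    · next h =>
      have hlt : (k : ℕ) - n < n := by omega
      have hnb : ¬(n ≤ (k : ℕ) - n ∧ (k : ℕ) - n < 2 * n) := by omega
      rw [map_add, map_mul, aeval_X, aeval_X, aeval_C, sub, dif_pos h, sub, dif_neg hnb,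
        MvPolynomial.algebraMap_eq, map_add]
      ring
    · next h =>
      rw [aeval_X, sub, dif_neg h]
  have hcomp : (aeval (sub n hm t)).comp (aeval (sub n hm s))
      = aeval (R := ℂ) (sub n hm (t + s)) := by
    apply algHom_ext
    intro k
    simp only [AlgHom.comp_apply, aeval_X]
    exact hX k
  exact AlgHom.congr_fun hcomp p

lemma aeval_sub_zero (n : ℕ) (hm : 2 * n ≤ m) (p : MvPolynomial (Fin m) ℂ) :
    aeval (sub n hm 0) p = p := by
  have : sub n hm 0 = X := by
    funext k
    rw [sub]
    split <;> simp
  rw [this, aeval_X_left_apply]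

lemma pderiv_X_val (k j : Fin m) :
    pderiv k (X j : MvPolynomial (Fin m) ℂ) = if (j : ℕ) = (k : ℕ) then 1 else 0 := by
  by_cases h : j = k
  · subst h; simp [pderiv_X_self]
  · rw [pderiv_X_of_ne h, if_neg (fun hv => h (Fin.ext hv))]

lemma pderiv_sub_apply (n : ℕ) (hm : 2 * n ≤ m) (t : ℂ) (k l : Fin m) :
    pderiv k (sub n hm t l) =
      (if (l : ℕ) = (k : ℕ) then 1 else 0)
        + (if (l : ℕ) = n + (k : ℕ) ∧ n ≤ (l : ℕ) ∧ (l : ℕ) < 2 * n then C t else 0) := by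
  rw [sub]
  split
  · next hb =>
    rw [map_add, pderiv_C_mul, pderiv_X_val, pderiv_X_val]
    congr 1
    by_cases hc : ((⟨(l : ℕ) - n, by omega⟩ : Fin m) : ℕ) = (k : ℕ)
    · simp only [Fin.val_mk] at hc
      rw [if_pos hc, if_pos (by omega), mul_one]
    · simp only [Fin.val_mk] at hc
      rw [if_neg hc, if_neg (by omega), mul_zero]
  · next hb =>
    have hc2 : ¬((l : ℕ) = n + (k : ℕ) ∧ n ≤ (l : ℕ) ∧ (l : ℕ) < 2 * n) := by omega
    rw [pderiv_X_val, if_neg hc2, add_zero]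

lemma chain1 (n : ℕ) (hm : 2 * n ≤ m) (t : ℂ) (k : Fin m) (hk : (k : ℕ) < n)
    (p : MvPolynomial (Fin m) ℂ) :
    pderiv k (aeval (sub n hm t) p)
      = aeval (sub n hm t) (pderiv k p)
        + C t * aeval (sub n hm t) (pderiv (⟨n + (k : ℕ), by omega⟩ : Fin m) p) := by
  set k' : Fin m := ⟨n + (k : ℕ), by omega⟩ with hk'
  have hvk' : (k' : ℕ) = n + (k : ℕ) := rfl
  have hkk' : k ≠ k' := by
    intro h
    have := congrArg Fin.val h
    rw [hvk'] at this
    omega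
  rw [pderiv_aeval]
  have hzero : ∀ l ∈ (Finset.univ : Finset (Fin m)), l ∉ ({k, k'} : Finset (Fin m)) →
      pderiv k (sub n hm t l) * aeval (sub n hm t) (pderiv l p) = 0 := by
    intro l _ hl
    simp only [Finset.mem_insert, Finset.mem_singleton, not_or] at hl
    obtain ⟨h1, h2⟩ := hl
    have hv1 : (l : ℕ) ≠ (k : ℕ) := fun hv => h1 (Fin.ext hv)
    have hv2 : (l : ℕ) ≠ (k' : ℕ) := fun hv => h2 (Fin.ext hv)
    rw [hvk'] at hv2
    rw [pderiv_sub_apply, if_neg hv1, if_neg (by omega), add_zero, zero_mul]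
  rw [← Finset.sum_subset (Finset.subset_univ {k, k'}) hzero, Finset.sum_pair hkk']
  have e1 : pderiv k (sub n hm t k) = 1 := by
    rw [pderiv_sub_apply, if_pos rfl, if_neg (by omega), add_zero]
  have e2 : pderiv k (sub n hm t k') = C t := by
    rw [pderiv_sub_apply, hvk', if_neg (by omega), if_pos (by omega), zero_add]
  rw [e1, e2, one_mul]

lemma chain2 (n : ℕ) (hm : 2 * n ≤ m) (t : ℂ) (k : Fin m) (hk : (k : ℕ) < n)
    (p : MvPolynomial (Fin m) ℂ) :
    pderiv (⟨n + (k : ℕ), by omega⟩ : Fin m) (aeval (sub n hm t) p)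
      = aeval (sub n hm t) (pderiv (⟨n + (k : ℕ), by omega⟩ : Fin m) p) := by
  set k' : Fin m := ⟨n + (k : ℕ), by omega⟩ with hk'
  have hvk' : (k' : ℕ) = n + (k : ℕ) := rfl
  rw [pderiv_aeval]
  have hzero : ∀ l ∈ (Finset.univ : Finset (Fin m)), l ∉ ({k'} : Finset (Fin m)) →
      pderiv k' (sub n hm t l) * aeval (sub n hm t) (pderiv l p) = 0 := by
    intro l _ hl
    simp only [Finset.mem_singleton] at hl
    have hv1 : (l : ℕ) ≠ (k' : ℕ) := fun hv => hl (Fin.ext hv)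
    rw [hvk'] at hv1
    rw [pderiv_sub_apply, if_neg (by rw [hvk']; omega), if_neg (by omega), add_zero, zero_mul]
  rw [← Finset.sum_subset (Finset.subset_univ {k'}) hzero, Finset.sum_singleton]
  have e1 : pderiv k' (sub n hm t k') = 1 := by
    rw [pderiv_sub_apply, if_pos rfl, if_neg (by rw [hvk']; omega), add_zero]
  rw [e1, one_mul]

end
end S5

open S5

/-- Exactness of the constant-coefficient Cauchy–Riemann-type operators
`Lᵢ = ∂/∂xᵢ + i ∂/∂x_{n+i}` on homogeneous polynomials: if `g₁, …, g_n` are homogeneous of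
degree `d` and `Lᵢ g_j = L_j g_i` for all `i, j`, then there is a homogeneous polynomial `f`
of degree `d + 1` with `Lᵢ f = g_i` for all `i`. -/
theorem statement5 (n m d : ℕ) (hn : 1 ≤ n) (hm : 2 * n ≤ m)
    (g : Fin n → MvPolynomial (Fin m) ℂ)
    (hg : ∀ i : Fin n, (g i).IsHomogeneous d)
    (hsym : ∀ i j : Fin n,
      pderiv (⟨(i : ℕ), by have := i.isLt; omega⟩ : Fin m) (g j) +
        Complex.I • pderiv (⟨n + (i : ℕ), by have := i.isLt; omega⟩ : Fin m) (g j) =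
      pderiv (⟨(j : ℕ), by have := j.isLt; omega⟩ : Fin m) (g i) +
        Complex.I • pderiv (⟨n + (j : ℕ), by have := j.isLt; omega⟩ : Fin m) (g i)) :
    ∃ f : MvPolynomial (Fin m) ℂ, f.IsHomogeneous (d + 1) ∧
      ∀ i : Fin n,
        pderiv (⟨(i : ℕ), by have := i.isLt; omega⟩ : Fin m) f +
          Complex.I • pderiv (⟨n + (i : ℕ), by have := i.isLt; omega⟩ : Fin m) f = g i := by
  have hnm : n ≤ m := by omega
  set v := sub (m := m) n hm Complex.I with hv
  set w := sub (m := m) n hm (-Complex.I) with hw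
  set G : Fin n → MvPolynomial (Fin m) ℂ := fun i => aeval v (g i) with hGdef
  have key : ∀ (a b : MvPolynomial (Fin m) ℂ) (u : Fin m → MvPolynomial (Fin m) ℂ),
      aeval u a + C Complex.I * aeval u b = aeval u (a + Complex.I • b) := by
    intro a b u
    rw [map_add, map_smul, smul_eq_C_mul]
  have hGhom : ∀ i, (G i).IsHomogeneous d := fun i =>
    aeval_sub_isHomogeneous n hm Complex.I (hg i)
  have hGsym : ∀ i j, pderiv (Fin.castLE hnm i) (G j) = pderiv (Fin.castLE hnm j) (G i) := by
    intro i j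
    have h1 : pderiv (Fin.castLE hnm i) (G j)
        = aeval v (pderiv (Fin.castLE hnm i) (g j))
          + C Complex.I * aeval v (pderiv (⟨n + (i : ℕ), by have := i.isLt; omega⟩ : Fin m) (g j)) :=
      chain1 n hm Complex.I (Fin.castLE hnm i) i.isLt (g j)
    have h2 : pderiv (Fin.castLE hnm j) (G i)
        = aeval v (pderiv (Fin.castLE hnm j) (g i))
          + C Complex.I * aeval v (pderiv (⟨n + (j : ℕ), by have := j.isLt; omega⟩ : Fin m) (g i)) :=
      chain1 n hm Complex.I (Fin.castLE hnm j) j.isLt (g i)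
    rw [h1, h2, key, key]
    have hs : (pderiv (Fin.castLE hnm i) (g j) +
          Complex.I • pderiv (⟨n + (i : ℕ), by have := i.isLt; omega⟩ : Fin m) (g j))
        = (pderiv (Fin.castLE hnm j) (g i) +
          Complex.I • pderiv (⟨n + (j : ℕ), by have := j.isLt; omega⟩ : Fin m) (g i)) :=
      hsym i j
    rw [hs]
  obtain ⟨F, hFhom, hF⟩ := lemA n hnm d G hGhom hGsym
  refine ⟨aeval w F, aeval_sub_isHomogeneous n hm (-Complex.I) hFhom, ?_⟩
  intro i
  show pderiv (Fin.castLE hnm i) (aeval w F) +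
      Complex.I • pderiv (⟨n + (i : ℕ), by have := i.isLt; omega⟩ : Fin m) (aeval w F) = g i
  have h1 : pderiv (Fin.castLE hnm i) (aeval w F)
      = aeval w (G i)
        + C (-Complex.I) * aeval w (pderiv (⟨n + (i : ℕ), by have := i.isLt; omega⟩ : Fin m) F) := by
    have h := chain1 n hm (-Complex.I) (Fin.castLE hnm i) i.isLt F
    rw [hF i] at h
    exact h
  have h2 : pderiv (⟨n + (i : ℕ), by have := i.isLt; omega⟩ : Fin m) (aeval w F)
      = aeval w (pderiv (⟨n + (i : ℕ), by have := i.isLt; omega⟩ : Fin m) F) :=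
    chain2 n hm (-Complex.I) (Fin.castLE hnm i) i.isLt F
  rw [h1, h2]
  have hcancel : C (-Complex.I) *
        aeval w (pderiv (⟨n + (i : ℕ), by have := i.isLt; omega⟩ : Fin m) F)
      = -(Complex.I • aeval w (pderiv (⟨n + (i : ℕ), by have := i.isLt; omega⟩ : Fin m) F)) := by
    rw [smul_eq_C_mul, map_neg, neg_mul]
  rw [hcancel]
  have hfinal : aeval w (G i) = g i := by
    rw [hGdef]
    simp only []
    rw [hw, hv, aeval_sub_sub n hm (-Complex.I) Complex.I (g i), neg_add_cancel,
      aeval_sub_zero]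
  rw [hfinal]
  ring
end
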